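/- The Serre diagonal on the cellular chain complex of the standard n-cube is a chain map: Δ∘∂ = (∂⊗id + id⊗∂)∘Δ, where on homogeneous elements (id⊗∂)(x⊗y) = (−1)^{dim x} x ⊗ ∂y (Koszul sign convention). -/

import Mathlib

/-!
The cellular chain complex of the standard `n`-cube.

A face of the `n`-cube is encoded as a function `c : Fin n → Option Bool`,
with `some false` = the value `0`, `some true` = the value `1` and `none` = `∗`
(a free coordinate).  `Q n` is the free `ℤ`-module on the set of all faces
(the direct sum of all the graded pieces `Q_k`).
-/

open TensorProduct

/-- A face of the standard `n`-cube: value `some false` is `0`, `some true`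
is `1`, `none` is `∗` (a free coordinate). -/
abbrev CubeFace (n : ℕ) : Type := Fin n → Option Bool

/-- The set of free coordinates of a face. -/
def freeSet {n : ℕ} (c : CubeFace n) : Finset (Fin n) :=
  Finset.univ.filter fun i => c i = none

/-- The dimension of a face: the number of its free coordinates. -/
def faceDim {n : ℕ} (c : CubeFace n) : ℕ := (freeSet c).card

/-- The free `ℤ`-module on the faces of the `n`-cube (the total cellular
chain module `⊕ₖ Q_k`). -/
abbrev Q (n : ℕ) : Type := CubeFace n →₀ ℤ

/-- The sign exponent `p(c,i) = #{j < i : c j = ∗}`. -/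
def pExp {n : ℕ} (c : CubeFace n) (i : Fin n) : ℕ :=
  ((freeSet c).filter fun j => j < i).card

/-- Reassign the value `b` to all coordinates of `c` lying in `S`. -/
def setTo {n : ℕ} (c : CubeFace n) (S : Finset (Fin n)) (b : Bool) : CubeFace n :=
  fun i => if i ∈ S then some b else c i

/-- The shuffle sign exponent `s(I,J) = #{(i,j) ∈ I × J : j < i}`. -/
def shufExp {n : ℕ} (I J : Finset (Fin n)) : ℕ :=
  ((I ×ˢ J).filter fun p => p.2 < p.1).card

/-- The cellular boundary operator
`∂c = Σ_{i : c i = ∗} (−1)^{p(c,i)} (c[i↦1] − c[i↦0])`. -/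
noncomputable def bdry (n : ℕ) : Q n →ₗ[ℤ] Q n :=
  (Finsupp.lift (Q n) ℤ (CubeFace n)) fun c =>
    ∑ i ∈ freeSet c, ((-1 : ℤ) ^ pExp c i) •
      (Finsupp.single (Function.update c i (some true)) (1 : ℤ)
        - Finsupp.single (Function.update c i (some false)) (1 : ℤ))

/-- The Serre diagonal
`Δc = Σ_{I ⊔ J = free(c)} (−1)^{s(I,J)} c[J↦0] ⊗ c[I↦1]`. -/
noncomputable def serreDiag (n : ℕ) : Q n →ₗ[ℤ] Q n ⊗[ℤ] Q n :=
  (Finsupp.lift (Q n ⊗[ℤ] Q n) ℤ (CubeFace n)) fun c =>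
    ∑ I ∈ (freeSet c).powerset,
      ((-1 : ℤ) ^ shufExp I (freeSet c \ I)) •
        (Finsupp.single (setTo c (freeSet c \ I) false) (1 : ℤ) ⊗ₜ[ℤ]
          Finsupp.single (setTo c I true) (1 : ℤ))

/-- The Koszul sign operator `x ↦ (−1)^{dim x} x` (on basis elements). -/
noncomputable def koszul (n : ℕ) : Q n →ₗ[ℤ] Q n :=
  (Finsupp.lift (Q n) ℤ (CubeFace n)) fun c =>
    ((-1 : ℤ) ^ faceDim c) • Finsupp.single c (1 : ℤ)

variable {n : ℕ}

theorem freeSet_update (c : CubeFace n) (i : Fin n) (b : Bool) :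
    freeSet (Function.update c i (some b)) = (freeSet c).erase i := by
  ext j
  simp only [freeSet, Finset.mem_filter, Finset.mem_univ, true_and, Finset.mem_erase]
  rcases eq_or_ne j i with h | h <;> simp [h, Function.update]

theorem freeSet_setTo (c : CubeFace n) (S : Finset (Fin n)) (b : Bool) :
    freeSet (setTo c S b) = freeSet c \ S := by
  ext j
  by_cases h : j ∈ S <;> simp [freeSet, Finset.mem_filter, h] <;> simp [setTo, h]

theorem bdry_single (c : CubeFace n) : bdry n (Finsupp.single c 1) =
    ∑ i ∈ freeSet c, ((-1 : ℤ) ^ pExp c i) •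
      (Finsupp.single (Function.update c i (some true)) (1 : ℤ)
        - Finsupp.single (Function.update c i (some false)) (1 : ℤ)) := by
  rw [bdry, Finsupp.lift_apply, Finsupp.sum_single_index] <;> simp

theorem serreDiag_single (c : CubeFace n) : serreDiag n (Finsupp.single c 1) =
    ∑ I ∈ (freeSet c).powerset,
      ((-1 : ℤ) ^ shufExp I (freeSet c \ I)) •
        (Finsupp.single (setTo c (freeSet c \ I) false) (1 : ℤ) ⊗ₜ[ℤ]
          Finsupp.single (setTo c I true) (1 : ℤ)) := by
  rw [serreDiag, Finsupp.lift_apply, Finsupp.sum_single_index] <;> simp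

theorem koszul_single (c : CubeFace n) : koszul n (Finsupp.single c 1) =
    ((-1 : ℤ) ^ faceDim c) • Finsupp.single c (1 : ℤ) := by
  rw [koszul, Finsupp.lift_apply, Finsupp.sum_single_index] <;> simp

-- face (funext) lemmas
theorem setTo_update (c : CubeFace n) (i : Fin n) (v : Option Bool) (S : Finset (Fin n))
    (b : Bool) (h : i ∉ S) :
    setTo (Function.update c i v) S b = Function.update (setTo c S b) i v := by
  funext j
  rcases eq_or_ne j i with rfl | hj
  · simp [setTo, h, Function.update]
  · simp [setTo, Function.update, hj]

theorem setTo_update_same (c : CubeFace n) (i : Fin n) (S : Finset (Fin n)) (b : Bool)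
    (h : i ∉ S) :
    setTo (Function.update c i (some b)) S b = setTo c (insert i S) b := by
  funext j
  rcases eq_or_ne j i with rfl | hj
  · simp [setTo, Function.update]
  · simp [setTo, Function.update, hj]

theorem update_setTo (c : CubeFace n) (i : Fin n) (S : Finset (Fin n)) (b : Bool)
    (h : i ∉ S) :
    Function.update (setTo c S b) i (some b) = setTo c (insert i S) b := by
  funext j
  rcases eq_or_ne j i with rfl | hj
  · simp [setTo, Function.update]
  · simp [setTo, Function.update, hj]

-- counting lemmas
theorem shufExp_eq_sum (I J : Finset (Fin n)) :
    shufExp I J = ∑ a ∈ I, (J.filter (· < a)).card := by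
  rw [shufExp, Finset.card_filter, Finset.sum_product]
  exact Finset.sum_congr rfl fun a _ => (Finset.card_filter _ _).symm

theorem shufExp_insert_left (I J : Finset (Fin n)) (i : Fin n) (h : i ∉ I) :
    shufExp (insert i I) J = shufExp I J + (J.filter (· < i)).card := by
  rw [shufExp_eq_sum, shufExp_eq_sum, Finset.sum_insert h, add_comm]

theorem shufExp_eq_sum' (I J : Finset (Fin n)) :
    shufExp I J = ∑ b ∈ J, (I.filter (b < ·)).card := by
  rw [shufExp, Finset.card_filter, Finset.sum_product_right]
  exact Finset.sum_congr rfl fun a _ => (Finset.card_filter _ _).symm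

theorem shufExp_insert_right (I J : Finset (Fin n)) (j : Fin n) (h : j ∉ J) :
    shufExp I (insert j J) = shufExp I J + (I.filter (j < ·)).card := by
  rw [shufExp_eq_sum', shufExp_eq_sum', Finset.sum_insert h, add_comm]

theorem lt_add_gt (I : Finset (Fin n)) (i : Fin n) (h : i ∉ I) :
    (I.filter (· < i)).card + (I.filter (i < ·)).card = I.card := by
  have : I.filter (i < ·) = I.filter (fun a => ¬ a < i) := by
    apply Finset.filter_congr
    intro a ha
    have : a ≠ i := by rintro rfl; exact h ha
    simp only [not_lt]
    exact ⟨le_of_lt, fun hle => lt_of_le_of_ne hle this.symm⟩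
  rw [this, Finset.card_filter_add_card_filter_not]

noncomputable def elT (a b : CubeFace n) : Q n ⊗[ℤ] Q n :=
  Finsupp.single a 1 ⊗ₜ[ℤ] Finsupp.single b 1

theorem hL (c : CubeFace n) :
    serreDiag n (bdry n (Finsupp.single c 1)) =
      (∑ p ∈ (freeSet c).sigma (fun i => ((freeSet c).erase i).powerset),
        ((-1 : ℤ) ^ (pExp c p.1 + shufExp p.2 ((freeSet c).erase p.1 \ p.2))) •
          elT (setTo (Function.update c p.1 (some true)) ((freeSet c).erase p.1 \ p.2) false)
              (setTo (Function.update c p.1 (some true)) p.2 true))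
      - (∑ p ∈ (freeSet c).sigma (fun i => ((freeSet c).erase i).powerset),
        ((-1 : ℤ) ^ (pExp c p.1 + shufExp p.2 ((freeSet c).erase p.1 \ p.2))) •
          elT (setTo (Function.update c p.1 (some false)) ((freeSet c).erase p.1 \ p.2) false)
              (setTo (Function.update c p.1 (some false)) p.2 true)) := by
  rw [bdry_single, map_sum, ← Finset.sum_sub_distrib, Finset.sum_sigma]
  apply Finset.sum_congr rfl
  intro i hi
  rw [map_smul, map_sub, serreDiag_single, serreDiag_single, freeSet_update, freeSet_update,
    smul_sub, Finset.smul_sum, Finset.smul_sum, ← Finset.sum_sub_distrib]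
  apply Finset.sum_congr rfl
  intro I hI
  rw [smul_smul, smul_smul, ← pow_add, elT, elT]

theorem sdiff_sdiff_cancel {F I : Finset (Fin n)} (h : I ⊆ F) : F \ (F \ I) = I :=
  sdiff_sdiff_eq_self h

theorem hR (c : CubeFace n) :
    (TensorProduct.map (bdry n) (LinearMap.id : Q n →ₗ[ℤ] Q n)
        + TensorProduct.map (koszul n) (bdry n)) (serreDiag n (Finsupp.single c 1)) =
      ((∑ q ∈ (freeSet c).powerset.sigma (fun I => (I : Finset (Fin n))),
        ((-1 : ℤ) ^ (shufExp q.1 (freeSet c \ q.1) + pExp (setTo c (freeSet c \ q.1) false) q.2)) •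
          elT (Function.update (setTo c (freeSet c \ q.1) false) q.2 (some true)) (setTo c q.1 true))
      - (∑ q ∈ (freeSet c).powerset.sigma (fun I => (I : Finset (Fin n))),
        ((-1 : ℤ) ^ (shufExp q.1 (freeSet c \ q.1) + pExp (setTo c (freeSet c \ q.1) false) q.2)) •
          elT (Function.update (setTo c (freeSet c \ q.1) false) q.2 (some false)) (setTo c q.1 true)))
      + ((∑ q ∈ (freeSet c).powerset.sigma (fun I => freeSet c \ I),
        ((-1 : ℤ) ^ (shufExp q.1 (freeSet c \ q.1) + (pExp (setTo c q.1 true) q.2 + q.1.card))) •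
          elT (setTo c (freeSet c \ q.1) false) (Function.update (setTo c q.1 true) q.2 (some true)))
      - (∑ q ∈ (freeSet c).powerset.sigma (fun I => freeSet c \ I),
        ((-1 : ℤ) ^ (shufExp q.1 (freeSet c \ q.1) + (pExp (setTo c q.1 true) q.2 + q.1.card))) •
          elT (setTo c (freeSet c \ q.1) false) (Function.update (setTo c q.1 true) q.2 (some false)))) := by
  conv_rhs => rw [Finset.sum_sigma, Finset.sum_sigma, Finset.sum_sigma, Finset.sum_sigma,
    ← Finset.sum_sub_distrib, ← Finset.sum_sub_distrib, ← Finset.sum_add_distrib]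
  rw [serreDiag_single, map_sum]
  apply Finset.sum_congr rfl
  intro I hI
  have hIF : I ⊆ freeSet c := Finset.mem_powerset.mp hI
  rw [map_smul, LinearMap.add_apply, TensorProduct.map_tmul, TensorProduct.map_tmul,
    LinearMap.id_coe, id_eq, bdry_single, bdry_single, koszul_single,
    freeSet_setTo, freeSet_setTo, sdiff_sdiff_cancel hIF]
  have hd : faceDim (setTo c (freeSet c \ I) false) = I.card := by
    rw [faceDim, freeSet_setTo, sdiff_sdiff_cancel hIF]
  rw [hd]
  simp only [TensorProduct.sum_tmul, TensorProduct.smul_tmul', TensorProduct.sub_tmul,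
    TensorProduct.tmul_sum, TensorProduct.tmul_smul, TensorProduct.tmul_sub,
    Finset.smul_sum, smul_smul, smul_sub, ← pow_add, elT]
  rw [smul_add, Finset.smul_sum, Finset.smul_sum, ← Finset.sum_sub_distrib, ← Finset.sum_sub_distrib]
  congr 1
  · apply Finset.sum_congr rfl; intro i hi
    simp only [smul_sub, TensorProduct.smul_tmul', smul_smul, ← pow_add]
  · apply Finset.sum_congr rfl; intro j hj
    simp only [smul_sub, TensorProduct.smul_tmul', smul_smul, ← pow_add]

theorem erase_sdiff_eq (F I : Finset (Fin n)) (i : Fin n) :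
    F.erase i \ I = F \ insert i I := by
  ext j; simp only [Finset.mem_sdiff, Finset.mem_erase, Finset.mem_insert]; tauto

theorem insert_sdiff_erase (F I : Finset (Fin n)) (i : Fin n) (hiF : i ∈ F) (hiI : i ∉ I) :
    insert i (F.erase i \ I) = F \ I := by
  ext j
  simp only [Finset.mem_insert, Finset.mem_sdiff, Finset.mem_erase]
  constructor
  · rintro (rfl | ⟨⟨_, hj⟩, hjI⟩) <;> tauto
  · rintro ⟨hjF, hjI⟩
    rcases eq_or_ne j i with rfl | hne <;> tauto

theorem sdiff_erase_eq (F I : Finset (Fin n)) (i : Fin n) (hiF : i ∈ F) :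
    F \ I.erase i = insert i (F \ I) := by
  ext j
  simp only [Finset.mem_insert, Finset.mem_sdiff, Finset.mem_erase]
  constructor
  · rintro ⟨hjF, hj⟩
    rcases eq_or_ne j i with rfl | hne <;> tauto
  · rintro (rfl | ⟨hjF, hjI⟩) <;> tauto

theorem pExp_setTo (c : CubeFace n) (S : Finset (Fin n)) (b : Bool) (i : Fin n) :
    pExp (setTo c S b) i = ((freeSet c \ S).filter (· < i)).card := by
  rw [pExp, freeSet_setTo]

theorem filter_insert_lt_self (S : Finset (Fin n)) (i : Fin n) :
    ((insert i S).filter (· < i)).card = (S.filter (· < i)).card := by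
  rw [Finset.filter_insert, if_neg (lt_irrefl i)]

theorem pExp_split (c : CubeFace n) (i : Fin n) (I : Finset (Fin n)) (hi : i ∈ freeSet c)
    (hI : I ⊆ (freeSet c).erase i) :
    pExp c i = (I.filter (· < i)).card + (((freeSet c).erase i \ I).filter (· < i)).card := by
  rw [pExp]
  have h1 : (freeSet c).filter (· < i) = ((freeSet c).erase i).filter (· < i) := by
    rw [Finset.filter_erase, Finset.erase_eq_of_notMem]
    simp
  rw [h1, ← Finset.union_sdiff_of_subset hI, Finset.filter_union,
    Finset.card_union_of_disjoint (Finset.disjoint_filter_filter Finset.disjoint_sdiff),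
    Finset.union_sdiff_cancel_left Finset.disjoint_sdiff]

theorem id1 (c : CubeFace n) :
    ∑ p ∈ (freeSet c).sigma (fun i => ((freeSet c).erase i).powerset),
        ((-1 : ℤ) ^ (pExp c p.1 + shufExp p.2 ((freeSet c).erase p.1 \ p.2))) •
          elT (setTo (Function.update c p.1 (some true)) ((freeSet c).erase p.1 \ p.2) false)
              (setTo (Function.update c p.1 (some true)) p.2 true)
    = ∑ q ∈ (freeSet c).powerset.sigma (fun I => (I : Finset (Fin n))),
        ((-1 : ℤ) ^ (shufExp q.1 (freeSet c \ q.1) + pExp (setTo c (freeSet c \ q.1) false) q.2)) •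
          elT (Function.update (setTo c (freeSet c \ q.1) false) q.2 (some true))
              (setTo c q.1 true) := by
  apply Finset.sum_nbij' (i := fun p => (⟨insert p.1 p.2, p.1⟩ : Σ _ : Finset (Fin n), Fin n))
    (j := fun q => (⟨q.2, q.1.erase q.2⟩ : Σ _ : Fin n, Finset (Fin n)))
  · rintro ⟨i, I⟩ hp
    rw [Finset.mem_sigma] at hp ⊢
    obtain ⟨hi, hI⟩ := hp
    rw [Finset.mem_powerset] at hI
    refine ⟨Finset.mem_powerset.mpr ?_, Finset.mem_insert_self _ _⟩
    exact Finset.insert_subset hi (hI.trans (Finset.erase_subset _ _))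
  · rintro ⟨I, i⟩ hq
    rw [Finset.mem_sigma] at hq ⊢
    obtain ⟨hI, hi⟩ := hq
    rw [Finset.mem_powerset] at hI
    exact ⟨hI hi, Finset.mem_powerset.mpr (Finset.erase_subset_erase _ hI)⟩
  · rintro ⟨i, I⟩ hp
    rw [Finset.mem_sigma, Finset.mem_powerset] at hp
    have hiI : i ∉ I := fun h => Finset.notMem_erase i _ (hp.2 h)
    simp [Finset.erase_insert hiI]
  · rintro ⟨I, i⟩ hq
    rw [Finset.mem_sigma] at hq
    simp [Finset.insert_erase hq.2]
  · rintro ⟨i, I⟩ hp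
    rw [Finset.mem_sigma, Finset.mem_powerset] at hp
    obtain ⟨hi, hI⟩ := hp
    have hiI : i ∉ I := fun h => Finset.notMem_erase i _ (hI h)
    have hIF : insert i I ⊆ freeSet c :=
      Finset.insert_subset hi (hI.trans (Finset.erase_subset _ _))
    have hsd : (freeSet c).erase i \ I = freeSet c \ insert i I := erase_sdiff_eq _ _ _
    -- sign
    have hsgn : pExp c i + shufExp I ((freeSet c).erase i \ I)
        = shufExp (insert i I) (freeSet c \ insert i I)
          + pExp (setTo c (freeSet c \ insert i I) false) i := by
      rw [pExp_setTo, sdiff_sdiff_cancel hIF, filter_insert_lt_self,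
        shufExp_insert_left _ _ _ hiI, ← hsd, pExp_split c i I hi hI]
      omega
    have hface1 : setTo (Function.update c i (some true)) ((freeSet c).erase i \ I) false
        = Function.update (setTo c (freeSet c \ insert i I) false) i (some true) := by
      rw [hsd, setTo_update]
      simp
    have hface2 : setTo (Function.update c i (some true)) I true = setTo c (insert i I) true :=
      setTo_update_same c i I true hiI
    simp only [hsgn, hface1, hface2]

theorem neg_one_pow_par {a b g : ℕ} (h : b = a + 2 * g) : ((-1 : ℤ)) ^ a = (-1) ^ b := by
  rw [h, pow_add, pow_mul, neg_one_sq, one_pow, mul_one]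

theorem id2 (c : CubeFace n) :
    ∑ p ∈ (freeSet c).sigma (fun i => ((freeSet c).erase i).powerset),
        ((-1 : ℤ) ^ (pExp c p.1 + shufExp p.2 ((freeSet c).erase p.1 \ p.2))) •
          elT (setTo (Function.update c p.1 (some false)) ((freeSet c).erase p.1 \ p.2) false)
              (setTo (Function.update c p.1 (some false)) p.2 true)
    = ∑ q ∈ (freeSet c).powerset.sigma (fun I => freeSet c \ I),
        ((-1 : ℤ) ^ (shufExp q.1 (freeSet c \ q.1) + (pExp (setTo c q.1 true) q.2 + q.1.card))) •
          elT (setTo c (freeSet c \ q.1) false)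
              (Function.update (setTo c q.1 true) q.2 (some false)) := by
  apply Finset.sum_nbij' (i := fun p => (⟨p.2, p.1⟩ : Σ _ : Finset (Fin n), Fin n))
    (j := fun q => (⟨q.2, q.1⟩ : Σ _ : Fin n, Finset (Fin n)))
  · rintro ⟨i, I⟩ hp
    rw [Finset.mem_sigma, Finset.mem_powerset] at hp ⊢
    obtain ⟨hi, hI⟩ := hp
    have hiI : i ∉ I := fun h => Finset.notMem_erase i _ (hI h)
    exact ⟨hI.trans (Finset.erase_subset _ _), Finset.mem_sdiff.mpr ⟨hi, hiI⟩⟩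
  · rintro ⟨I, i⟩ hq
    rw [Finset.mem_sigma, Finset.mem_powerset] at hq ⊢
    obtain ⟨hI, hi⟩ := hq
    rw [Finset.mem_sdiff] at hi
    refine ⟨hi.1, fun j hj => Finset.mem_erase.mpr ⟨fun h => hi.2 ?_, hI hj⟩⟩
    subst h; exact hj
  · rintro ⟨i, I⟩ _; rfl
  · rintro ⟨I, i⟩ _; rfl
  · rintro ⟨i, I⟩ hp
    rw [Finset.mem_sigma, Finset.mem_powerset] at hp
    obtain ⟨hi, hI⟩ := hp
    have hiI : i ∉ I := fun h => Finset.notMem_erase i _ (hI h)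
    have hIF : I ⊆ freeSet c := hI.trans (Finset.erase_subset _ _)
    have hins : insert i ((freeSet c).erase i \ I) = freeSet c \ I :=
      insert_sdiff_erase _ _ _ hi hiI
    have hiJ : i ∉ (freeSet c).erase i \ I := by simp
    -- sign
    have hsgn : (-1 : ℤ) ^ (pExp c i + shufExp I ((freeSet c).erase i \ I))
        = (-1) ^ (shufExp I (freeSet c \ I) + (pExp (setTo c I true) i + I.card)) := by
      have e1 : pExp (setTo c I true) i = ((freeSet c \ I).filter (· < i)).card := pExp_setTo ..
      have e1b := filter_insert_lt_self ((freeSet c).erase i \ I) i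
      rw [hins] at e1b
      have e2 := shufExp_insert_right I ((freeSet c).erase i \ I) i hiJ
      rw [hins] at e2
      have e3 := pExp_split c i I hi hI
      have e4 := lt_add_gt I i hiI
      exact neg_one_pow_par (g := (I.filter (i < ·)).card) (by omega)
    have hface1 : setTo (Function.update c i (some false)) ((freeSet c).erase i \ I) false
        = setTo c (freeSet c \ I) false := by
      rw [setTo_update_same c i _ false hiJ, hins]
    have hface2 : setTo (Function.update c i (some false)) I true
        = Function.update (setTo c I true) i (some false) := setTo_update c i _ I true hiI
    simp only [hsgn, hface1, hface2]

theorem id3 (c : CubeFace n) :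
    ∑ q ∈ (freeSet c).powerset.sigma (fun I => (I : Finset (Fin n))),
        ((-1 : ℤ) ^ (shufExp q.1 (freeSet c \ q.1) + pExp (setTo c (freeSet c \ q.1) false) q.2)) •
          elT (Function.update (setTo c (freeSet c \ q.1) false) q.2 (some false))
              (setTo c q.1 true)
    = ∑ r ∈ (freeSet c).powerset.sigma (fun I => freeSet c \ I),
        ((-1 : ℤ) ^ (shufExp r.1 (freeSet c \ r.1) + (pExp (setTo c r.1 true) r.2 + r.1.card))) •
          elT (setTo c (freeSet c \ r.1) false)
              (Function.update (setTo c r.1 true) r.2 (some true)) := by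
  apply Finset.sum_nbij' (i := fun q => (⟨q.1.erase q.2, q.2⟩ : Σ _ : Finset (Fin n), Fin n))
    (j := fun r => (⟨insert r.2 r.1, r.2⟩ : Σ _ : Finset (Fin n), Fin n))
  · rintro ⟨I, i⟩ hq
    rw [Finset.mem_sigma, Finset.mem_powerset] at hq ⊢
    obtain ⟨hI, hi⟩ := hq
    exact ⟨(Finset.erase_subset _ _).trans hI,
      Finset.mem_sdiff.mpr ⟨hI hi, Finset.notMem_erase _ _⟩⟩
  · rintro ⟨I, i⟩ hr
    rw [Finset.mem_sigma, Finset.mem_powerset] at hr ⊢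
    obtain ⟨hI, hi⟩ := hr
    rw [Finset.mem_sdiff] at hi
    exact ⟨Finset.insert_subset hi.1 hI, Finset.mem_insert_self _ _⟩
  · rintro ⟨I, i⟩ hq
    rw [Finset.mem_sigma] at hq
    simp [Finset.insert_erase hq.2]
  · rintro ⟨I, i⟩ hr
    rw [Finset.mem_sigma] at hr
    have : i ∉ I := (Finset.mem_sdiff.mp hr.2).2
    simp [Finset.erase_insert this]
  · rintro ⟨I, i⟩ hq
    rw [Finset.mem_sigma, Finset.mem_powerset] at hq
    obtain ⟨hI, hi⟩ := hq
    have hiF : i ∈ freeSet c := hI hi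
    have hiJ : i ∉ freeSet c \ I := fun h => (Finset.mem_sdiff.mp h).2 hi
    have hiI2 : i ∉ I.erase i := Finset.notMem_erase _ _
    have h2 : freeSet c \ I.erase i = insert i (freeSet c \ I) := sdiff_erase_eq _ _ _ hiF
    have hII : insert i (I.erase i) = I := Finset.insert_erase hi
    -- sign
    have hsgn : (-1 : ℤ) ^ (shufExp I (freeSet c \ I) + pExp (setTo c (freeSet c \ I) false) i)
        = (-1) ^ (shufExp (I.erase i) (freeSet c \ I.erase i)
            + (pExp (setTo c (I.erase i) true) i + (I.erase i).card)) := by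
      have e1 : pExp (setTo c (freeSet c \ I) false) i = (I.filter (· < i)).card := by
        rw [pExp_setTo, sdiff_sdiff_cancel hI]
      have e1b := filter_insert_lt_self (I.erase i) i
      rw [hII] at e1b
      have e2 := shufExp_insert_left (I.erase i) (freeSet c \ I) i hiI2
      rw [hII] at e2
      have e3 : pExp (setTo c (I.erase i) true) i
          = ((freeSet c \ I.erase i).filter (· < i)).card := pExp_setTo ..
      have e3b := filter_insert_lt_self (freeSet c \ I) i
      rw [← h2] at e3b
      have e4 := shufExp_insert_right (I.erase i) (freeSet c \ I) i hiJ
      rw [← h2] at e4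
      have e5 := lt_add_gt (I.erase i) i hiI2
      exact neg_one_pow_par (g := ((I.erase i).filter (i < ·)).card) (by omega)
    have hface1 : Function.update (setTo c (freeSet c \ I) false) i (some false)
        = setTo c (freeSet c \ I.erase i) false := by
      rw [update_setTo c i _ false hiJ, h2]
    have hface2 : setTo c I true = Function.update (setTo c (I.erase i) true) i (some true) := by
      rw [update_setTo c i _ true hiI2, hII]
    simp only [hsgn, hface1, hface2]

/-- The Serre diagonal on the cellular chain complex of the
standard `n`-cube is a chain map: `Δ ∘ ∂ = (∂ ⊗ id + id ⊗ ∂) ∘ Δ`, where on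
homogeneous elements `(id ⊗ ∂)(x ⊗ y) = (−1)^{dim x} x ⊗ ∂y`
(Koszul sign convention). -/
theorem serreDiag_chain_map (n : ℕ) :
    (serreDiag n).comp (bdry n) =
      (TensorProduct.map (bdry n) LinearMap.id
        + TensorProduct.map (koszul n) (bdry n)).comp (serreDiag n) := by
  apply Finsupp.lhom_ext
  intro c b
  have hb : (Finsupp.single c b : Q n) = b • Finsupp.single c 1 := by
    rw [Finsupp.smul_single, smul_eq_mul, mul_one]
  rw [LinearMap.comp_apply]
  erw [LinearMap.comp_apply]
  rw [hb, map_smul, map_smul]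
  erw [map_smul, map_smul]
  congr 1
  rw [hL]
  erw [hR]
  rw [id1, id2, id3]
  abel
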